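/- Let G be a properly edge-coloured bipartite multigraph with n colours such that each colour class is a matching of size at least n + 7 n^{3/4}, where n is sufficiently large. Assume (as a black box) that every n-edge-coloured bipartite multigraph whose colour classes are matchings of size at least n contains a rainbow matching of size at least n - \sqrt{n}. Then G contains a full rainbow matching, i.e., a rainbow matching using every one of the n colours. -/

import Mathlib

open Finset
open scoped Classical

section Defs

variable {V C E : Type*}

/-- The two endpoints of an edge of a multigraph given by endpoint functions `e₁ e₂`. -/
def edgeEnds [DecidableEq V] (e₁ e₂ : E → V) (e : E) : Finset V := {e₁ e, e₂ e}

/-- A finite set of edges is a matching: all edges are non-loops and pairwise vertex-disjoint. -/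
def IsMatchingE [DecidableEq V] (e₁ e₂ : E → V) (M : Finset E) : Prop :=
  (∀ e ∈ M, e₁ e ≠ e₂ e) ∧
  ∀ a ∈ M, ∀ b ∈ M, a ≠ b → Disjoint (edgeEnds e₁ e₂ a) (edgeEnds e₁ e₂ b)

/-- A set of edges is rainbow: all its edges have pairwise distinct colours. -/
def IsRainbow (col : E → C) (M : Finset E) : Prop := Set.InjOn col ↑M

/-- The colour class of colour `c`: the set of all edges of colour `c`. -/
noncomputable def colourClass [Fintype E] (col : E → C) (c : C) : Finset E :=
  Finset.univ.filter fun e => col e = c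

/-- The set of vertices covered by a set of edges `M`. -/
def matchedVerts [DecidableEq V] (e₁ e₂ : E → V) (M : Finset E) : Finset V :=
  M.biUnion (edgeEnds e₁ e₂)

/-- The set of vertices spanned by the colour class of `c`
(i.e. incident to at least one edge of colour `c`). -/
noncomputable def spannedVerts [Fintype V] [DecidableEq V] [Fintype E]
    (e₁ e₂ : E → V) (col : E → C) (c : C) : Finset V :=
  Finset.univ.filter fun v => ∃ e, col e = c ∧ (e₁ e = v ∨ e₂ e = v)

/-- `u` and `v` are distinct vertices joined by an edge of colour `c`. -/
def adjOfColour (e₁ e₂ : E → V) (col : E → C) (c : C) (u v : V) : Prop :=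
  u ≠ v ∧ ∃ e, col e = c ∧ ((e₁ e = u ∧ e₂ e = v) ∨ (e₁ e = v ∧ e₂ e = u))

/-- The colour class of `c` is a vertex-disjoint union of (non-trivial) cliques:
whenever `uv` and `vw` are edges of colour `c` with `u ≠ w`, also `uw` is an
edge of colour `c`. -/
def IsCliqueUnion (e₁ e₂ : E → V) (col : E → C) (c : C) : Prop :=
  ∀ u v w, adjOfColour e₁ e₂ col c u v → adjOfColour e₁ e₂ col c v w → u ≠ w →
    adjOfColour e₁ e₂ col c u w

end Defs



section Prob
variable {V : Type*} [Fintype V] [DecidableEq V]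

variable (μ : Bool → ℝ)

/-- weight of a configuration -/
noncomputable def Wt (g : V → Bool) : ℝ := ∏ v, μ (g v)

lemma sum_Wt (hμ : μ true + μ false = 1) : ∑ g : V → Bool, Wt μ g = 1 := by
  rw [show (∑ g : V → Bool, Wt μ g) = ∑ g : V → Bool, ∏ v, μ (g v) from rfl,
    ← Fintype.prod_sum (fun _ v => μ v)]
  simp [hμ]

lemma Wt_nonneg (h0 : ∀ b, 0 ≤ μ b) (g : V → Bool) : 0 ≤ Wt μ g :=
  Finset.prod_nonneg fun v _ => h0 _

lemma speel (hμ : μ true + μ false = 1) (v : V) (φ : Bool → ℝ) (h : (V → Bool) → ℝ)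
    (hh : ∀ g x, h (Function.update g v x) = h g) :
    ∑ g : V → Bool, Wt μ g * (φ (g v) * h g)
      = (μ true * φ true + μ false * φ false) * ∑ g : V → Bool, Wt μ g * h g := by
  -- P g : product over erase
  set P : (V → Bool) → ℝ := fun g => ∏ z ∈ univ.erase v, μ (g z) with hP
  have hW : ∀ g : V → Bool, Wt μ g = μ (g v) * P g := fun g =>
    (Finset.mul_prod_erase univ (fun z => μ (g z)) (mem_univ v)).symm
  have hPinv : ∀ (g : V → Bool) (x : Bool), P (Function.update g v x) = P g := by
    intro g x
    refine Finset.prod_congr rfl fun z hz => ?_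
    rw [Function.update_of_ne (Finset.ne_of_mem_erase hz)]
  -- key : for any c : Bool → ℝ, sum decomposes
  have key : ∀ c : Bool → ℝ,
      ∑ g : V → Bool, c (g v) * (P g * h g)
        = (c true + c false) * ∑ g ∈ univ.filter (fun g : V → Bool => g v = true),
            P g * h g := by
    intro c
    have hsplit := Finset.sum_filter_add_sum_filter_not (univ : Finset (V → Bool))
      (fun g : V → Bool => g v = true) (fun g => c (g v) * (P g * h g))
    have h1 : ∑ g ∈ univ.filter (fun g : V → Bool => g v = true),
        c (g v) * (P g * h g)
        = c true * ∑ g ∈ univ.filter (fun g : V → Bool => g v = true), P g * h g := by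
      rw [Finset.mul_sum]
      refine Finset.sum_congr rfl fun g hg => ?_
      rw [(Finset.mem_filter.mp hg).2]
    have h2 : ∑ g ∈ univ.filter (fun g : V → Bool => ¬ g v = true),
        c (g v) * (P g * h g)
        = c false * ∑ g ∈ univ.filter (fun g : V → Bool => g v = true), P g * h g := by
      have e1 : ∑ g ∈ univ.filter (fun g : V → Bool => ¬ g v = true),
          c (g v) * (P g * h g)
          = ∑ g ∈ univ.filter (fun g : V → Bool => ¬ g v = true), c false * (P g * h g) := by
        refine Finset.sum_congr rfl fun g hg => ?_
        have : g v = false := by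
          simpa using (Finset.mem_filter.mp hg).2
        rw [this]
      rw [e1, Finset.mul_sum]
      refine Finset.sum_nbij' (i := fun g => Function.update g v true)
        (j := fun g => Function.update g v false) ?_ ?_ ?_ ?_ ?_
      · intro g hg; simp
      · intro g hg; simp
      · intro g hg
        have hgv : g v = false := by simpa using (Finset.mem_filter.mp hg).2
        rw [Function.update_idem]
        conv_rhs => rw [← Function.update_eq_self v g]
        rw [hgv]
      · intro g hg
        have hgv : g v = true := by simpa using (Finset.mem_filter.mp hg).2
        rw [Function.update_idem]
        conv_rhs => rw [← Function.update_eq_self v g]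
        rw [hgv]
      · intro g hg
        rw [hPinv, hh]
    rw [← hsplit, h1, h2]; ring
  have L : ∑ g : V → Bool, Wt μ g * (φ (g v) * h g)
      = ∑ g : V → Bool, (fun b => μ b * φ b) (g v) * (P g * h g) := by
    refine Finset.sum_congr rfl fun g _ => ?_
    rw [hW g]; ring
  have R : ∑ g : V → Bool, Wt μ g * h g
      = ∑ g : V → Bool, (fun b => μ b) (g v) * (P g * h g) := by
    refine Finset.sum_congr rfl fun g _ => ?_
    rw [hW g]; ring
  rw [L, R, key (fun b => μ b * φ b), key (fun b => μ b)]
  rw [hμ]; ring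


lemma dpeel (hμ : μ true + μ false = 1) (u w : V) (huw : u ≠ w) (φ : Bool → Bool → ℝ)
    (h : (V → Bool) → ℝ)
    (hhu : ∀ g x, h (Function.update g u x) = h g)
    (hhw : ∀ g x, h (Function.update g w x) = h g) :
    ∑ g : V → Bool, Wt μ g * (φ (g u) (g w) * h g)
      = (∑ x : Bool, ∑ y : Bool, μ x * μ y * φ x y) * ∑ g : V → Bool, Wt μ g * h g := by
  have expand : ∀ a b : Bool, φ a b = ∑ x : Bool, (if a = x then (1:ℝ) else 0) * φ x b := by
    intro a b; cases a <;> simp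
  have L : ∑ g : V → Bool, Wt μ g * (φ (g u) (g w) * h g)
      = ∑ x : Bool, ∑ g : V → Bool,
          Wt μ g * ((if g u = x then (1:ℝ) else 0) * (φ x (g w) * h g)) := by
    rw [Finset.sum_comm]
    refine Finset.sum_congr rfl fun g _ => ?_
    rw [← Finset.sum_congr rfl (fun x (_ : x ∈ (univ : Finset Bool)) => rfl)]
    rw [show ∑ x : Bool, Wt μ g * ((if g u = x then (1:ℝ) else 0) * (φ x (g w) * h g))
        = Wt μ g * ((∑ x : Bool, (if g u = x then (1:ℝ) else 0) * φ x (g w)) * h g) by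
      rw [Finset.sum_mul, Finset.mul_sum]; refine Finset.sum_congr rfl fun x _ => by ring]
    rw [← expand]
  rw [L]
  have step : ∀ x : Bool, ∑ g : V → Bool,
        Wt μ g * ((if g u = x then (1:ℝ) else 0) * (φ x (g w) * h g))
      = μ x * ((μ true * φ x true + μ false * φ x false) * ∑ g : V → Bool, Wt μ g * h g) := by
    intro x
    have s1 := speel μ hμ u (fun a => if a = x then (1:ℝ) else 0)
      (fun g => φ x (g w) * h g) (by
        intro g y
        rw [Function.update_of_ne (Ne.symm huw), hhu])
    rw [s1]
    have s2 := speel μ hμ w (fun b => φ x b) h hhw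
    rw [s2]
    have : (μ true * (if (true : Bool) = x then (1:ℝ) else 0)
        + μ false * (if (false : Bool) = x then (1:ℝ) else 0)) = μ x := by
      cases x <;> simp
    rw [this]
  rw [Finset.sum_congr rfl (fun x _ => step x)]
  rw [show ∑ x : Bool, ∑ y : Bool, μ x * μ y * φ x y
      = ∑ x : Bool, μ x * (μ true * φ x true + μ false * φ x false) by
    refine Finset.sum_congr rfl fun x _ => by rw [Fintype.sum_bool]; ring]
  rw [Finset.sum_mul]
  refine Finset.sum_congr rfl fun x _ => by ring

lemma fact_prod {E : Type*} (hμ : μ true + μ false = 1) (e₁ e₂ : E → V)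
    (M : Finset E) (hnl : ∀ e ∈ M, e₁ e ≠ e₂ e)
    (hdisj : ∀ a ∈ M, ∀ b ∈ M, a ≠ b →
      e₁ a ≠ e₁ b ∧ e₁ a ≠ e₂ b ∧ e₂ a ≠ e₁ b ∧ e₂ a ≠ e₂ b)
    (φ : Bool → Bool → ℝ) :
    ∑ g : V → Bool, Wt μ g * ∏ e ∈ M, φ (g (e₁ e)) (g (e₂ e))
      = (∑ x : Bool, ∑ y : Bool, μ x * μ y * φ x y) ^ M.card := by
  induction M using Finset.cons_induction with
  | empty => simpa using sum_Wt μ hμ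
  | cons a M ha IH =>
    have hnl' : ∀ e ∈ M, e₁ e ≠ e₂ e := fun e he => hnl e (Finset.mem_cons_of_mem he)
    have hdisj' : ∀ x ∈ M, ∀ b ∈ M, x ≠ b →
        e₁ x ≠ e₁ b ∧ e₁ x ≠ e₂ b ∧ e₂ x ≠ e₁ b ∧ e₂ x ≠ e₂ b :=
      fun x hx b hb hxb => hdisj x (Finset.mem_cons_of_mem hx) b (Finset.mem_cons_of_mem hb) hxb
    have hL : ∑ g : V → Bool, Wt μ g * ∏ e ∈ Finset.cons a M ha, φ (g (e₁ e)) (g (e₂ e))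
        = ∑ g : V → Bool, Wt μ g * (φ (g (e₁ a)) (g (e₂ a)) *
            ∏ e ∈ M, φ (g (e₁ e)) (g (e₂ e))) := by
      refine Finset.sum_congr rfl fun g _ => ?_
      rw [Finset.prod_cons]
    rw [hL]
    have hinv : ∀ (v : V), (∀ e ∈ M, e₁ e ≠ v ∧ e₂ e ≠ v) →
        ∀ (g : V → Bool) (x : Bool),
        (∏ e ∈ M, φ ((Function.update g v x) (e₁ e)) ((Function.update g v x) (e₂ e)))
          = ∏ e ∈ M, φ (g (e₁ e)) (g (e₂ e)) := by
      intro v hv g x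
      refine Finset.prod_congr rfl fun e he => ?_
      rw [Function.update_of_ne (hv e he).1, Function.update_of_ne (hv e he).2]
    have h1 : ∀ e ∈ M, e₁ e ≠ e₁ a ∧ e₂ e ≠ e₁ a := by
      intro e he
      have := hdisj e (Finset.mem_cons_of_mem he) a (Finset.mem_cons_self a M)
        (by rintro rfl; exact ha he)
      exact ⟨this.1, this.2.2.1⟩
    have h2 : ∀ e ∈ M, e₁ e ≠ e₂ a ∧ e₂ e ≠ e₂ a := by
      intro e he
      have := hdisj e (Finset.mem_cons_of_mem he) a (Finset.mem_cons_self a M)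
        (by rintro rfl; exact ha he)
      exact ⟨this.2.1, this.2.2.2⟩
    rw [dpeel μ hμ (e₁ a) (e₂ a) (hnl a (Finset.mem_cons_self a M)) φ _
      (fun g x => hinv (e₁ a) h1 g x) (fun g x => hinv (e₂ a) h2 g x)]
    rw [IH hnl' hdisj', Finset.card_cons, pow_succ]
    ring

/-- Generic exponential-moment tail bound over the weighted cube. -/
lemma markov_tail {E : Type*} [Fintype E] (h0 : ∀ b, 0 ≤ μ b) (hμ : μ true + μ false = 1)
    (e₁ e₂ : E → V) (M : Finset E) (hnl : ∀ e ∈ M, e₁ e ≠ e₂ e)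
    (hdisj : ∀ a ∈ M, ∀ b ∈ M, a ≠ b →
      e₁ a ≠ e₁ b ∧ e₁ a ≠ e₂ b ∧ e₂ a ≠ e₁ b ∧ e₂ a ≠ e₂ b)
    (pred : Bool → Bool → Bool) (lam : ℝ) (hlam : 0 < lam) (b : ℕ)
    (EV : (V → Bool) → Prop)
    (hEV : ∀ g, EV g → lam ^ b ≤ lam ^ ((M.filter
        (fun e => pred (g (e₁ e)) (g (e₂ e)) = true)).card)) :
    ∑ g ∈ univ.filter (fun g : V → Bool => EV g), Wt μ g
      ≤ (lam⁻¹) ^ b *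
        (∑ x : Bool, ∑ y : Bool, μ x * μ y * (if pred x y then lam else 1)) ^ M.card := by
  set X : (V → Bool) → ℕ := fun g =>
    (M.filter (fun e => pred (g (e₁ e)) (g (e₂ e)) = true)).card with hX
  have key : ∀ g : V → Bool,
      ∏ e ∈ M, (if pred (g (e₁ e)) (g (e₂ e)) then lam else 1) = lam ^ X g := by
    intro g
    rw [Finset.prod_ite, Finset.prod_const, Finset.prod_const, one_pow, mul_one]
  have fact := fact_prod μ hμ e₁ e₂ M hnl hdisj (fun x y => if pred x y then lam else 1)
  have step1 : ∑ g ∈ univ.filter (fun g : V → Bool => EV g), Wt μ g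
      ≤ ∑ g ∈ univ.filter (fun g : V → Bool => EV g),
          Wt μ g * ((lam⁻¹) ^ b * lam ^ X g) := by
    refine Finset.sum_le_sum fun g hg => ?_
    have hg' : EV g := (Finset.mem_filter.mp hg).2
    have h1 : (1:ℝ) ≤ (lam⁻¹) ^ b * lam ^ X g := by
      have hlb := hEV g hg'
      rw [show (1:ℝ) = lam⁻¹ ^ b * lam ^ b by
        rw [inv_pow, inv_mul_cancel₀ (by positivity)]]
      exact mul_le_mul_of_nonneg_left hlb (by positivity)
    calc Wt μ g = Wt μ g * 1 := by ring
    _ ≤ Wt μ g * ((lam⁻¹) ^ b * lam ^ X g) :=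
        mul_le_mul_of_nonneg_left h1 (Wt_nonneg μ h0 g)
  have step2 : ∑ g ∈ univ.filter (fun g : V → Bool => EV g),
        Wt μ g * ((lam⁻¹) ^ b * lam ^ X g)
      ≤ ∑ g : V → Bool, Wt μ g * ((lam⁻¹) ^ b * lam ^ X g) := by
    refine Finset.sum_le_sum_of_subset_of_nonneg (Finset.filter_subset _ _) ?_
    intro g _ _
    have := Wt_nonneg μ h0 g
    positivity
  have step3 : ∑ g : V → Bool, Wt μ g * ((lam⁻¹) ^ b * lam ^ X g)
      = (lam⁻¹) ^ b *
        (∑ x : Bool, ∑ y : Bool, μ x * μ y * (if pred x y then lam else 1)) ^ M.card := by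
    rw [← fact, Finset.mul_sum]
    refine Finset.sum_congr rfl fun g _ => ?_
    rw [key g]
    ring
  calc _ ≤ _ := step1
  _ ≤ _ := step2
  _ = _ := step3

lemma union_bound {ι : Type*} (h0 : ∀ b, 0 ≤ μ b) (s : Finset ι) (B : ι → (V → Bool) → Prop) :
    ∑ g ∈ univ.filter (fun g : V → Bool => ∃ c ∈ s, B c g), Wt μ g
      ≤ ∑ c ∈ s, ∑ g ∈ univ.filter (fun g : V → Bool => B c g), Wt μ g := by
  induction s using Finset.cons_induction with
  | empty => simp
  | cons a s ha IH =>
    have hsub : univ.filter (fun g : V → Bool => ∃ c ∈ Finset.cons a s ha, B c g)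
        ⊆ (univ.filter (fun g : V → Bool => B a g)) ∪
          (univ.filter (fun g : V → Bool => ∃ c ∈ s, B c g)) := by
      intro g hg
      rcases Finset.mem_filter.mp hg with ⟨-, c, hc, hBc⟩
      rcases Finset.mem_cons.mp hc with rfl | hc'
      · exact Finset.mem_union_left _ (Finset.mem_filter.mpr ⟨Finset.mem_univ _, hBc⟩)
      · exact Finset.mem_union_right _ (Finset.mem_filter.mpr ⟨Finset.mem_univ _, ⟨c, hc', hBc⟩⟩)
    have h1 : ∑ g ∈ univ.filter (fun g : V → Bool => ∃ c ∈ Finset.cons a s ha, B c g), Wt μ g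
        ≤ ∑ g ∈ (univ.filter (fun g : V → Bool => B a g)) ∪
            (univ.filter (fun g : V → Bool => ∃ c ∈ s, B c g)), Wt μ g :=
      Finset.sum_le_sum_of_subset_of_nonneg hsub (fun g _ _ => Wt_nonneg μ h0 g)
    have h2 : ∑ g ∈ (univ.filter (fun g : V → Bool => B a g)) ∪
          (univ.filter (fun g : V → Bool => ∃ c ∈ s, B c g)), Wt μ g
        ≤ ∑ g ∈ univ.filter (fun g : V → Bool => B a g), Wt μ g
          + ∑ g ∈ univ.filter (fun g : V → Bool => ∃ c ∈ s, B c g), Wt μ g := by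
      have := Finset.sum_union_inter (s₁ := univ.filter (fun g : V → Bool => B a g))
        (s₂ := univ.filter (fun g : V → Bool => ∃ c ∈ s, B c g)) (f := Wt μ)
      have hnn : 0 ≤ ∑ g ∈ (univ.filter (fun g : V → Bool => B a g)) ∩
          (univ.filter (fun g : V → Bool => ∃ c ∈ s, B c g)), Wt μ g :=
        Finset.sum_nonneg fun g _ => Wt_nonneg μ h0 g
      linarith
    rw [Finset.sum_cons]
    exact le_trans h1 (le_trans h2 (by linarith [IH]))

lemma exists_good {ι : Type*} (h0 : ∀ b, 0 ≤ μ b) (hμ : μ true + μ false = 1)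
    (s : Finset ι) (B : ι → (V → Bool) → Prop)
    (hlt : ∑ c ∈ s, ∑ g ∈ univ.filter (fun g : V → Bool => B c g), Wt μ g < 1) :
    ∃ g : V → Bool, ∀ c ∈ s, ¬ B c g := by
  by_contra hcon
  push_neg at hcon
  have hall : univ.filter (fun g : V → Bool => ∃ c ∈ s, B c g) = univ := by
    refine Finset.eq_univ_of_forall fun g => Finset.mem_filter.mpr ⟨Finset.mem_univ _, ?_⟩
    obtain ⟨c, hc, hB⟩ := hcon g
    exact ⟨c, hc, hB⟩
  have := union_bound μ h0 s B
  rw [hall, sum_Wt μ hμ] at this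
  linarith

end Prob

section Repair

variable {V E : Type*} [DecidableEq V] {n : ℕ}

lemma isMatchingE_subset [DecidableEq V] {e₁ e₂ : E → V} {M M' : Finset E}
    (h : IsMatchingE e₁ e₂ M) (hsub : M' ⊆ M) : IsMatchingE e₁ e₂ M' :=
  ⟨fun e he => h.1 e (hsub he), fun a ha b hb hab => h.2 a (hsub ha) b (hsub hb) hab⟩

lemma card_matchedVerts_le {e₁ e₂ : E → V} (P : Finset E) :
    (matchedVerts e₁ e₂ P).card ≤ 2 * P.card := by
  classical
  refine le_trans (Finset.card_biUnion_le) ?_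
  have : ∀ e ∈ P, (edgeEnds e₁ e₂ e).card ≤ 2 := by
    intro e _
    refine le_trans (Finset.card_insert_le _ _) ?_
    simp
  calc ∑ e ∈ P, (edgeEnds e₁ e₂ e).card ≤ ∑ _e ∈ P, 2 := Finset.sum_le_sum this
  _ = 2 * P.card := by rw [Finset.sum_const, smul_eq_mul, mul_comm]

lemma repair (e₁ e₂ : E → V) (col : E → Fin n) (R : Finset (Fin n)) (T : Fin n → Finset E)
    (hTm : ∀ c ∈ R, IsMatchingE e₁ e₂ (T c))
    (hTcol : ∀ c ∈ R, ∀ e ∈ T c, col e = c)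
    (hTcard : ∀ c ∈ R, 2 * R.card ≤ (T c).card + 1) :
    ∃ P : Finset E, IsMatchingE e₁ e₂ P ∧ IsRainbow col P ∧
      (∀ e ∈ P, col e ∈ R ∧ e ∈ T (col e)) ∧ (∀ c ∈ R, ∃ e ∈ P, col e = c) := by
  classical
  induction R using Finset.induction_on with
  | empty => exact ⟨∅, ⟨by simp, by simp⟩, by simp [IsRainbow], by simp, by simp⟩
  | @insert c R' hc IH =>
    obtain ⟨P', hP'm, hP'r, hP'mem, hP'cov⟩ := IH
      (fun c' hc' => hTm c' (Finset.mem_insert_of_mem hc'))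
      (fun c' hc' e he => hTcol c' (Finset.mem_insert_of_mem hc') e he)
      (fun c' hc' => by
        have h1 := hTcard c' (Finset.mem_insert_of_mem hc')
        have h2 : R'.card ≤ (insert c R').card := Finset.card_le_card (Finset.subset_insert _ _)
        omega)
    -- P' has at most R'.card edges
    have hP'card : P'.card ≤ R'.card := by
      have himg : P'.image col ⊆ R' := by
        intro x hx
        obtain ⟨e, he, rfl⟩ := Finset.mem_image.mp hx
        exact (hP'mem e he).1
      calc P'.card = (P'.image col).card := (Finset.card_image_of_injOn hP'r).symm
      _ ≤ R'.card := Finset.card_le_card himg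
    -- find an unblocked edge of colour c
    have hcR : c ∈ insert c R' := Finset.mem_insert_self c R'
    have hTcm : IsMatchingE e₁ e₂ (T c) := hTm c hcR
    set blocked := (T c).filter
      (fun e => ¬ Disjoint (edgeEnds e₁ e₂ e) (matchedVerts e₁ e₂ P')) with hbl
    have hblcard : blocked.card ≤ (matchedVerts e₁ e₂ P').card := by
      set f : E → V := fun e =>
        if h : ((edgeEnds e₁ e₂ e) ∩ (matchedVerts e₁ e₂ P')).Nonempty
        then h.choose else e₁ e with hf
      refine Finset.card_le_card_of_injOn f ?_ ?_
      · intro e he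
        have hnd := (Finset.mem_filter.mp he).2
        have hne : ((edgeEnds e₁ e₂ e) ∩ (matchedVerts e₁ e₂ P')).Nonempty := by
          rw [Finset.not_disjoint_iff] at hnd
          obtain ⟨v, hv1, hv2⟩ := hnd
          exact ⟨v, Finset.mem_inter.mpr ⟨hv1, hv2⟩⟩
        have : f e = hne.choose := by rw [hf]; simp [hne]
        rw [this]
        exact (Finset.mem_inter.mp hne.choose_spec).2
      · intro a ha b hb hab
        by_contra hne
        have hna : ((edgeEnds e₁ e₂ a) ∩ (matchedVerts e₁ e₂ P')).Nonempty := by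
          have hnd := (Finset.mem_filter.mp ha).2
          rw [Finset.not_disjoint_iff] at hnd
          obtain ⟨v, hv1, hv2⟩ := hnd
          exact ⟨v, Finset.mem_inter.mpr ⟨hv1, hv2⟩⟩
        have hnb : ((edgeEnds e₁ e₂ b) ∩ (matchedVerts e₁ e₂ P')).Nonempty := by
          have hnd := (Finset.mem_filter.mp hb).2
          rw [Finset.not_disjoint_iff] at hnd
          obtain ⟨v, hv1, hv2⟩ := hnd
          exact ⟨v, Finset.mem_inter.mpr ⟨hv1, hv2⟩⟩
        have hfa : f a = hna.choose := by rw [hf]; simp [hna]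
        have hfb : f b = hnb.choose := by rw [hf]; simp [hnb]
        have hva := Finset.mem_inter.mp hna.choose_spec
        have hvb := Finset.mem_inter.mp hnb.choose_spec
        have hdis := hTcm.2 a (Finset.mem_filter.mp ha).1 b (Finset.mem_filter.mp hb).1 hne
        have : f a ∈ edgeEnds e₁ e₂ b := by rw [hab, hfb]; exact hvb.1
        exact (Finset.disjoint_left.mp hdis (hfa ▸ hva.1)) this
    have hblock_lt : blocked.card < (T c).card := by
      have h1 := hTcard c hcR
      have h2 := card_matchedVerts_le (e₁ := e₁) (e₂ := e₂) P'
      have h3 : (insert c R').card = R'.card + 1 := Finset.card_insert_of_notMem hc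
      omega
    obtain ⟨e, he⟩ : ((T c) \ blocked).Nonempty := by
      have hss : blocked ⊆ T c := Finset.filter_subset _ _
      rw [← Finset.card_pos, Finset.card_sdiff_of_subset hss]
      omega
    have heT : e ∈ T c := (Finset.mem_sdiff.mp he).1
    have hedis : Disjoint (edgeEnds e₁ e₂ e) (matchedVerts e₁ e₂ P') := by
      have := (Finset.mem_sdiff.mp he).2
      rw [hbl] at this
      simp only [Finset.mem_filter, not_and, not_not] at this
      exact this heT
    have hcole : col e = c := hTcol c hcR e heT
    have heP' : e ∉ P' := by
      intro hmem
      exact hc (hcole ▸ (hP'mem e hmem).1)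
    refine ⟨insert e P', ⟨?_, ?_⟩, ?_, ?_, ?_⟩
    · intro a ha
      rcases Finset.mem_insert.mp ha with rfl | ha'
      · exact hTcm.1 a heT
      · exact hP'm.1 a ha'
    · intro a ha b hb hab
      rcases Finset.mem_insert.mp ha with rfl | ha' <;> rcases Finset.mem_insert.mp hb with rfl | hb'
      · exact absurd rfl hab
      · exact Finset.disjoint_left.mpr fun v hv1 hv2 =>
          (Finset.disjoint_left.mp hedis hv1)
            (Finset.mem_biUnion.mpr ⟨b, hb', hv2⟩)
      · exact Finset.disjoint_right.mpr fun v hv1 hv2 =>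
          (Finset.disjoint_left.mp hedis hv1)
            (Finset.mem_biUnion.mpr ⟨a, ha', hv2⟩)
      · exact hP'm.2 a ha' b hb' hab
    · intro a ha b hb hab
      simp only [Finset.coe_insert, Set.mem_insert_iff, Finset.mem_coe] at ha hb
      rcases ha with rfl | ha' <;> rcases hb with rfl | hb'
      · rfl
      · exfalso; exact hc (hcole ▸ hab ▸ (hP'mem b hb').1)
      · exfalso; exact hc (hcole ▸ hab.symm ▸ (hP'mem a ha').1)
      · exact hP'r ha' hb' hab
    · intro a ha
      rcases Finset.mem_insert.mp ha with rfl | ha'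
      · rw [hcole]; exact ⟨Finset.mem_insert_self _ _, hcole ▸ heT⟩
      · exact ⟨Finset.mem_insert_of_mem (hP'mem a ha').1, (hP'mem a ha').2⟩
    · intro c' hc'
      rcases Finset.mem_insert.mp hc' with rfl | hc''
      · exact ⟨e, Finset.mem_insert_self _ _, hcole⟩
      · obtain ⟨a, ha, hca⟩ := hP'cov c' hc''
        exact ⟨a, Finset.mem_insert_of_mem ha, hca⟩

end Repair

section ProbStep

variable {V E : Type*} [Fintype V] [DecidableEq V] [Fintype E]

set_option maxHeartbeats 2000000 in
lemma prob_step (n S t N : ℕ) (hNdef : N = n + S)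
    (e₁ e₂ : E → V) (K : Fin n → Finset E)
    (hKm : ∀ c, IsMatchingE e₁ e₂ (K c))
    (hKcard : ∀ c, (K c).card = N)
    (q : ℝ) (hq0 : 0 ≤ q) (hq1 : q ≤ 1)
    (hA : (n:ℝ) * Real.exp (2*q*N - (S+1)*Real.log 2) < 1/2)
    (hB : (n:ℝ) * Real.exp ((2*t)*Real.log 2 - q^2*N/2) < 1/2) :
    ∃ g : V → Bool, ∀ c : Fin n,
      n ≤ ((K c).filter (fun e => g (e₁ e) = false ∧ g (e₂ e) = false)).card ∧
      2*t ≤ ((K c).filter (fun e => g (e₁ e) = true ∧ g (e₂ e) = true)).card := by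
  classical
  set μ : Bool → ℝ := fun b => if b then q else 1 - q with hμdef
  have h0 : ∀ b, 0 ≤ μ b := by
    intro b; cases b <;> simp [hμdef] <;> linarith
  have hμ : μ true + μ false = 1 := by simp [hμdef]
  have hfour : ∀ c : Fin n, ∀ a ∈ K c, ∀ b ∈ K c, a ≠ b →
      e₁ a ≠ e₁ b ∧ e₁ a ≠ e₂ b ∧ e₂ a ≠ e₁ b ∧ e₂ a ≠ e₂ b := by
    intro c a ha b hb hab
    have hd := (hKm c).2 a ha b hb hab
    have h1a : e₁ a ∈ edgeEnds e₁ e₂ a := by simp [edgeEnds]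
    have h2a : e₂ a ∈ edgeEnds e₁ e₂ a := by simp [edgeEnds]
    have h1b : e₁ b ∈ edgeEnds e₁ e₂ b := by simp [edgeEnds]
    have h2b : e₂ b ∈ edgeEnds e₁ e₂ b := by simp [edgeEnds]
    refine ⟨?_, ?_, ?_, ?_⟩ <;> intro hEq
    · exact Finset.disjoint_left.mp hd h1a (hEq ▸ h1b)
    · exact Finset.disjoint_left.mp hd h1a (hEq ▸ h2b)
    · exact Finset.disjoint_left.mp hd h2a (hEq ▸ h1b)
    · exact Finset.disjoint_left.mp hd h2a (hEq ▸ h2b)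
  have hnl : ∀ c : Fin n, ∀ e ∈ K c, e₁ e ≠ e₂ e := fun c => (hKm c).1
  -- the bad events
  set BadA : Fin n → (V → Bool) → Prop := fun c g =>
    S + 1 ≤ ((K c).filter (fun e => (g (e₁ e) || g (e₂ e)) = true)).card with hBadA
  set BadB : Fin n → (V → Bool) → Prop := fun c g =>
    ((K c).filter (fun e => (g (e₁ e) && g (e₂ e)) = true)).card < 2 * t with hBadB
  -- bound for BadA
  have boundA : ∀ c : Fin n,
      ∑ g ∈ Finset.univ.filter (fun g : V → Bool => BadA c g), Wt μ g
        ≤ Real.exp (2*q*N - (S+1)*Real.log 2) := by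
    intro c
    have hm := markov_tail μ h0 hμ e₁ e₂ (K c) (hnl c) (hfour c)
      (fun x y => x || y) 2 two_pos (S+1) (BadA c)
      (fun g hg => pow_le_pow_right₀ one_le_two hg)
    have hCA : (∑ x : Bool, ∑ y : Bool, μ x * μ y * (if (x || y) then (2:ℝ) else 1))
        = 1 + (2*q - q^2) := by
      simp [hμdef, Fintype.sum_bool]
      ring
    rw [hCA, hKcard c] at hm
    rw [Finset.filter_congr_decidable] at hm
    rw [Finset.filter_congr_decidable]
    refine le_trans hm ?_
    have e2 : (1 + (2*q - q^2)) ≤ Real.exp (2*q) := by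
      have : (2*q - q^2) + 1 ≤ Real.exp (2*q - q^2) := Real.add_one_le_exp _
      have h3 : Real.exp (2*q - q^2) ≤ Real.exp (2*q) :=
        Real.exp_le_exp.mpr (by nlinarith)
      linarith
    have hnn : (0:ℝ) ≤ 1 + (2*q - q^2) := by nlinarith
    have e3 : (1 + (2*q - q^2)) ^ N ≤ Real.exp (2*q) ^ N := pow_le_pow_left₀ hnn e2 N
    have e4 : Real.exp (2*q) ^ N = Real.exp (2*q*N) := by
      rw [← Real.exp_nat_mul]
      ring_nf
    have e5 : ((2:ℝ)⁻¹) ^ (S+1) = Real.exp (-(((S:ℝ)+1) * Real.log 2)) := by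
      rw [show ((2:ℝ)⁻¹) ^ (S+1) = Real.exp ((((S+1:ℕ)):ℝ) * (-Real.log 2)) from by
        rw [Real.exp_nat_mul, Real.exp_neg, Real.exp_log two_pos]]
      congr 1
      push_cast
      ring
    calc ((2:ℝ)⁻¹) ^ (S+1) * (1 + (2*q - q^2)) ^ N
        ≤ ((2:ℝ)⁻¹) ^ (S+1) * Real.exp (2*q) ^ N := by
          apply mul_le_mul_of_nonneg_left e3 (by positivity)
    _ = Real.exp (-((S+1) * Real.log 2)) * Real.exp (2*q*N) := by rw [e4, e5]
    _ = Real.exp (2*q*N - (S+1)*Real.log 2) := by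
          rw [← Real.exp_add]
          congr 1
          push_cast
          ring
  -- bound for BadB
  have boundB : ∀ c : Fin n,
      ∑ g ∈ Finset.univ.filter (fun g : V → Bool => BadB c g), Wt μ g
        ≤ Real.exp ((2*t)*Real.log 2 - q^2*N/2) := by
    intro c
    have hm := markov_tail μ h0 hμ e₁ e₂ (K c) (hnl c) (hfour c)
      (fun x y => x && y) (2:ℝ)⁻¹ (by norm_num) (2*t) (BadB c)
      (fun g hg => pow_le_pow_of_le_one (by norm_num) (by norm_num) (le_of_lt hg))
    have hCB : (∑ x : Bool, ∑ y : Bool, μ x * μ y * (if (x && y) then (2:ℝ)⁻¹ else 1))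
        = 1 - q^2/2 := by
      simp [hμdef, Fintype.sum_bool]
      ring
    rw [hCB, hKcard c] at hm
    rw [Finset.filter_congr_decidable] at hm
    rw [Finset.filter_congr_decidable]
    refine le_trans hm ?_
    have e2 : (1 - q^2/2) ≤ Real.exp (-(q^2/2)) := by
      have := Real.add_one_le_exp (-(q^2/2))
      linarith
    have hnn : (0:ℝ) ≤ 1 - q^2/2 := by nlinarith
    have e3 : (1 - q^2/2) ^ N ≤ Real.exp (-(q^2/2)) ^ N := pow_le_pow_left₀ hnn e2 N
    have e4 : Real.exp (-(q^2/2)) ^ N = Real.exp (-(q^2/2) * N) := by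
      rw [← Real.exp_nat_mul]; ring_nf
    have e5 : (((2:ℝ)⁻¹)⁻¹) ^ (2*t) = Real.exp ((2*(t:ℝ)) * Real.log 2) := by
      rw [inv_inv]
      rw [show ((2:ℝ)) ^ (2*t) = Real.exp ((((2*t:ℕ)):ℝ) * Real.log 2) from by
        rw [Real.exp_nat_mul, Real.exp_log two_pos]]
      congr 1
      push_cast
      ring
    calc (((2:ℝ)⁻¹)⁻¹) ^ (2*t) * (1 - q^2/2) ^ N
        ≤ (((2:ℝ)⁻¹)⁻¹) ^ (2*t) * Real.exp (-(q^2/2)) ^ N := by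
          apply mul_le_mul_of_nonneg_left e3 (by positivity)
    _ = Real.exp ((2*t) * Real.log 2) * Real.exp (-(q^2/2) * N) := by rw [e4, e5]
    _ = Real.exp ((2*t)*Real.log 2 - q^2*N/2) := by
          rw [← Real.exp_add]
          congr 1
          push_cast
          ring
  -- union bound over Fin n × Bool
  set Bad : (Fin n × Bool) → (V → Bool) → Prop := fun cb g =>
    if cb.2 then BadA cb.1 g else BadB cb.1 g with hBad
  have htot : ∑ cb ∈ (Finset.univ : Finset (Fin n × Bool)),
      ∑ g ∈ Finset.univ.filter (fun g : V → Bool => Bad cb g), Wt μ g < 1 := by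
    rw [Fintype.sum_prod_type]
    have : ∀ c : Fin n, ∑ b : Bool,
        ∑ g ∈ Finset.univ.filter (fun g : V → Bool => Bad (c, b) g), Wt μ g
        ≤ Real.exp (2*q*N - (S+1)*Real.log 2)
          + Real.exp ((2*t)*Real.log 2 - q^2*N/2) := by
      intro c
      rw [Fintype.sum_bool]
      have hA' := boundA c
      have hB' := boundB c
      simp only [hBad, Finset.filter_congr_decidable]
      norm_num
      rw [Finset.filter_congr_decidable, Finset.filter_congr_decidable] at hA' hB' ⊢
      linarith
    calc ∑ c : Fin n, ∑ b : Bool,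
        ∑ g ∈ Finset.univ.filter (fun g : V → Bool => Bad (c, b) g), Wt μ g
        ≤ ∑ _c : Fin n, (Real.exp (2*q*N - (S+1)*Real.log 2)
            + Real.exp ((2*t)*Real.log 2 - q^2*N/2)) := Finset.sum_le_sum fun c _ => this c
    _ = (n:ℝ) * Real.exp (2*q*N - (S+1)*Real.log 2)
          + (n:ℝ) * Real.exp ((2*t)*Real.log 2 - q^2*N/2) := by
        rw [Finset.sum_const, Finset.card_univ, Fintype.card_fin]
        push_cast
        ring
    _ < 1/2 + 1/2 := by exact add_lt_add hA hB
    _ = 1 := by norm_num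
  rw [show (fun (cb : Fin n × Bool) => ∑ g ∈ Finset.univ.filter (fun g : V → Bool => Bad cb g), Wt μ g)
      = fun cb => ∑ g ∈ Finset.univ.filter (fun g : V → Bool => Bad cb g), Wt μ g from rfl] at htot
  have htot' : ∑ cb ∈ (Finset.univ : Finset (Fin n × Bool)),
      ∑ g ∈ @Finset.filter _ (fun g : V → Bool => Bad cb g)
        (fun a => Classical.propDecidable _) Finset.univ, Wt μ g < 1 := by
    refine lt_of_le_of_lt (le_of_eq ?_) htot
    refine Finset.sum_congr rfl fun cb _ => ?_
    congr 1
    exact Finset.filter_congr_decidable ..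
  obtain ⟨g, hg⟩ := exists_good μ h0 hμ (Finset.univ : Finset (Fin n × Bool)) Bad htot'
  refine ⟨g, fun c => ?_⟩
  have hgA : ¬ BadA c g := by
    have := hg (c, true) (Finset.mem_univ _)
    simpa [hBad] using this
  have hgB : ¬ BadB c g := by
    have := hg (c, false) (Finset.mem_univ _)
    simpa [hBad] using this
  constructor
  · -- both-false count
    have hsplit : ((K c).filter (fun e => (g (e₁ e) || g (e₂ e)) = true)).card
        + ((K c).filter (fun e => g (e₁ e) = false ∧ g (e₂ e) = false)).card = N := by
      rw [← hKcard c]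
      have hcongr : (K c).filter (fun e => g (e₁ e) = false ∧ g (e₂ e) = false)
          = (K c).filter (fun e => ¬ ((g (e₁ e) || g (e₂ e)) = true)) := by
        apply Finset.filter_congr
        intro e _
        constructor
        · rintro ⟨h1, h2⟩; simp [h1, h2]
        · intro h
          simp only [Bool.or_eq_true, not_or, Bool.not_eq_true] at h
          exact h
      rw [hcongr]
      exact Finset.card_filter_add_card_filter_not _
    rw [hBadA] at hgA
    simp only [not_le] at hgA
    omega
  · rw [hBadB] at hgB
    simp only [not_lt] at hgB
    have hcongr : (K c).filter (fun e => g (e₁ e) = true ∧ g (e₂ e) = true)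
        = (K c).filter (fun e => (g (e₁ e) && g (e₂ e)) = true) := by
      apply Finset.filter_congr
      intro e _
      simp [Bool.and_eq_true]
    rw [hcongr]
    exact hgB

end ProbStep

section Numeric

set_option maxHeartbeats 1000000 in
lemma numeric_bounds (n S t N : ℕ) (q : ℝ) (hn : 10^8 ≤ n)
    (hq : q = (9/5) * ((n:ℝ) ^ ((1:ℝ)/4))⁻¹)
    (hS : S = ⌈7 * (n:ℝ) ^ ((3:ℝ)/4)⌉₊)
    (ht : t = ⌈Real.sqrt n⌉₊)
    (hN : N = n + S) :
    0 ≤ q ∧ q ≤ 1 ∧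
    (n:ℝ) * Real.exp (2*q*N - (S+1)*Real.log 2) < 1/2 ∧
    (n:ℝ) * Real.exp ((2*t)*Real.log 2 - q^2*N/2) < 1/2 := by
  have hn0 : 0 < n := lt_of_lt_of_le (by norm_num) hn
  have hn0R : (0:ℝ) < (n:ℝ) := by exact_mod_cast hn0
  have hnR : ((10:ℝ))^(8:ℕ) ≤ (n:ℝ) := by exact_mod_cast hn
  set r : ℝ := (n:ℝ) ^ ((1:ℝ)/4) with hrdef
  have hr0 : 0 < r := Real.rpow_pos_of_pos hn0R _
  have hr4 : r ^ (4:ℕ) = (n:ℝ) := by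
    rw [hrdef, ← Real.rpow_natCast ((n:ℝ) ^ ((1:ℝ)/4)) 4, ← Real.rpow_mul (le_of_lt hn0R)]
    norm_num
  have hr3 : (n:ℝ) ^ ((3:ℝ)/4) = r ^ (3:ℕ) := by
    rw [hrdef, ← Real.rpow_natCast ((n:ℝ) ^ ((1:ℝ)/4)) 3, ← Real.rpow_mul (le_of_lt hn0R)]
    norm_num
  have hr2 : Real.sqrt (n:ℝ) = r ^ (2:ℕ) := by
    rw [Real.sqrt_eq_rpow, hrdef, ← Real.rpow_natCast ((n:ℝ) ^ ((1:ℝ)/4)) 2,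
      ← Real.rpow_mul (le_of_lt hn0R)]
    norm_num
  have hr100 : 100 ≤ r := by
    have h1 : ((10:ℝ)^(8:ℕ)) ^ ((1:ℝ)/4) ≤ (n:ℝ) ^ ((1:ℝ)/4) :=
      Real.rpow_le_rpow (by positivity) hnR (by norm_num)
    have h2 : ((10:ℝ)^(8:ℕ)) ^ ((1:ℝ)/4) = 100 := by
      rw [← Real.rpow_natCast (10:ℝ) 8, ← Real.rpow_mul (by norm_num)]
      rw [show ((8:ℕ):ℝ) * ((1:ℝ)/4) = ((2:ℕ):ℝ) by norm_num, Real.rpow_natCast]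
      norm_num
    rw [h2] at h1
    exact h1
  have hqr : q * r = 9/5 := by
    rw [hq]
    field_simp
  have hq0 : 0 ≤ q := by
    rw [hq]
    positivity
  have hq1 : q ≤ 1 := by
    have hqd : q = (9/5)/r := by
      rw [hq]
      ring
    rw [hqd, div_le_one hr0]
    linarith
  -- S, t, N bounds
  have hS1 : 7 * r ^ (3:ℕ) ≤ (S:ℝ) := by
    rw [hS, ← hr3]
    exact Nat.le_ceil _
  have hS2 : (S:ℝ) ≤ 7 * r ^ (3:ℕ) + 1 := by
    rw [hS, hr3]
    have h := Nat.ceil_lt_add_one (show (0:ℝ) ≤ 7 * r ^ (3:ℕ) by positivity)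
    linarith
  have ht1 : (t:ℝ) ≤ r ^ (2:ℕ) + 1 := by
    rw [ht, hr2]
    have h := Nat.ceil_lt_add_one (show (0:ℝ) ≤ r ^ (2:ℕ) by positivity)
    linarith
  have hNa : (N:ℝ) ≤ r ^ (4:ℕ) + 7 * r ^ (3:ℕ) + 1 := by
    have : (N:ℝ) = (n:ℝ) + (S:ℝ) := by rw [hN]; push_cast; ring
    rw [this, ← hr4]
    linarith
  have hNb : r ^ (4:ℕ) ≤ (N:ℝ) := by
    have : (N:ℝ) = (n:ℝ) + (S:ℝ) := by rw [hN]; push_cast; ring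
    rw [this, ← hr4]
    have hS0 : (0:ℝ) ≤ (S:ℝ) := Nat.cast_nonneg S
    linarith
  -- log bounds
  have hlog2a : (0.6931:ℝ) ≤ Real.log 2 := by
    have := Real.log_two_gt_d9; linarith
  have hlog2b : Real.log 2 ≤ 0.6932 := by
    have := Real.log_two_lt_d9; linarith
  have hlogn : Real.log (n:ℝ) ≤ 4 * r := by
    rw [← hr4, Real.log_pow]
    have h := Real.log_le_sub_one_of_pos hr0
    push_cast
    nlinarith
  have hlogn0 : 0 ≤ Real.log (n:ℝ) := Real.log_nonneg (by
    have : (1:ℝ) ≤ (10:ℝ)^(8:ℕ) := by norm_num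
    linarith)
  -- generic reduction
  have main : ∀ X : ℝ, X + Real.log (n:ℝ) + 1 ≤ 0 → (n:ℝ) * Real.exp X < 1/2 := by
    intro X hX
    have h1 : Real.exp X ≤ Real.exp (-Real.log (n:ℝ) - 1) :=
      Real.exp_le_exp.mpr (by linarith)
    have h2 : Real.exp (-Real.log (n:ℝ) - 1) = (1/(n:ℝ)) * Real.exp (-1) := by
      rw [show -Real.log (n:ℝ) - 1 = -Real.log (n:ℝ) + (-1) by ring, Real.exp_add,
        Real.exp_neg, Real.exp_log hn0R]
      ring
    have h4 : (2:ℝ) < Real.exp 1 := by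
      have := Real.exp_one_gt_d9; linarith
    have h3 : Real.exp (-1 : ℝ) < 1/2 := by
      rw [Real.exp_neg]
      rw [show (1/2 : ℝ) = 2⁻¹ by norm_num]
      exact inv_strictAnti₀ two_pos h4

    calc (n:ℝ) * Real.exp X ≤ (n:ℝ) * ((1/(n:ℝ)) * Real.exp (-1)) := by
          rw [← h2]; exact mul_le_mul_of_nonneg_left h1 (le_of_lt hn0R)
    _ = Real.exp (-1) := by field_simp
    _ < 1/2 := h3
  refine ⟨hq0, hq1, main _ ?_, main _ ?_⟩
  · -- A bound
    set a : ℝ := 2*q*(N:ℝ) - ((S:ℝ)+1)*Real.log 2 + Real.log (n:ℝ) + 1 with hadef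
    have key : a * r ≤ 0 := by
      have hb1 : 2*q*(N:ℝ)*r ≤ (18/5)*(r ^ (4:ℕ) + 7*r ^ (3:ℕ) + 1) := by
        have : 2*q*(N:ℝ)*r = 2*(N:ℝ)*(q*r) := by ring
        rw [this, hqr]
        linarith
      have hb2 : (7*r ^ (3:ℕ)) * (0.6931:ℝ) * r ≤ (((S:ℝ)+1)*Real.log 2) * r := by
        have hstep : (7*r ^ (3:ℕ)) * (0.6931:ℝ) ≤ ((S:ℝ)+1)*Real.log 2 := by
          have h1 : (7*r ^ (3:ℕ)) ≤ (S:ℝ)+1 := by linarith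
          have := mul_le_mul h1 hlog2a (by norm_num) (by nlinarith [hS1, pow_pos hr0 3])
          linarith
        exact mul_le_mul_of_nonneg_right hstep hr0.le
      have hb3 : Real.log (n:ℝ) * r ≤ 4*r*r := mul_le_mul_of_nonneg_right hlogn hr0.le
      have expand : a * r = 2*q*(N:ℝ)*r - (((S:ℝ)+1)*Real.log 2)*r
          + Real.log (n:ℝ) * r + r := by rw [hadef]; ring
      rw [expand]
      nlinarith [hr100, hr0, pow_pos hr0 3, pow_pos hr0 4,
        mul_nonneg (mul_nonneg (pow_nonneg hr0.le 3) hr0.le)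
          (sub_nonneg.mpr hr100)]
    by_contra hpos
    push_neg at hpos
    nlinarith [mul_pos hpos hr0]
  · -- B bound
    set b : ℝ := (2*(t:ℝ))*Real.log 2 - q^2*(N:ℝ)/2 + Real.log (n:ℝ) + 1 with hbdef
    have hq2r2 : q^2 * r^(2:ℕ) = 81/25 := by
      have : q^2 * r^(2:ℕ) = (q*r)^2 := by ring
      rw [this, hqr]
      norm_num
    have key : b * r^(2:ℕ) ≤ 0 := by
      have hb1 : (2*(t:ℝ))*Real.log 2 * r^(2:ℕ)
          ≤ 2*(r ^ (2:ℕ) + 1) * (0.6932:ℝ) * r^(2:ℕ) := by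
        have h1 : (2*(t:ℝ))*Real.log 2 ≤ 2*(r ^ (2:ℕ) + 1) * (0.6932:ℝ) := by
          have h2 : (2*(t:ℝ)) ≤ 2*(r ^ (2:ℕ) + 1) := by linarith
          have := mul_le_mul h2 hlog2b (by linarith [hlog2a]) (by positivity)
          linarith
        exact mul_le_mul_of_nonneg_right h1 (by positivity)
      have hb2 : q^2*(N:ℝ)/2 * r^(2:ℕ) ≥ (81/50) * r ^ (4:ℕ) := by
        have : q^2*(N:ℝ)/2 * r^(2:ℕ) = (N:ℝ)/2 * (q^2 * r^(2:ℕ)) := by ring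
        rw [this, hq2r2]
        nlinarith [hNb]
      have hb3 : Real.log (n:ℝ) * r^(2:ℕ) ≤ 4*r*r^(2:ℕ) :=
        mul_le_mul_of_nonneg_right hlogn (by positivity)
      have expand : b * r^(2:ℕ) = (2*(t:ℝ))*Real.log 2 * r^(2:ℕ)
          - q^2*(N:ℝ)/2 * r^(2:ℕ) + Real.log (n:ℝ) * r^(2:ℕ) + r^(2:ℕ) := by
        rw [hbdef]; ring
      rw [expand]
      nlinarith [hr100, hr0, pow_pos hr0 2, pow_pos hr0 4,
        mul_nonneg (mul_nonneg (pow_nonneg hr0.le 3) hr0.le) (sub_nonneg.mpr hr100),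
        mul_nonneg (mul_nonneg (pow_nonneg hr0.le 2) hr0.le) (sub_nonneg.mpr hr100)]
    by_contra hpos
    push_neg at hpos
    nlinarith [mul_pos hpos (pow_pos hr0 2)]

end Numeric

set_option maxHeartbeats 1000000 in
/-- Theorem 3 with constant 7, from the black box Proposition 11:
assuming every `m`-edge-coloured bipartite multigraph whose colour classes are
matchings of size at least `m` has a rainbow matching of size at least `m - √m`,
for all sufficiently large `n`, every properly coloured bipartite multigraph with
`n` colours whose colour classes are matchings of size at least `n + 7 n^{3/4}`
has a full rainbow matching using every colour. -/
theorem stmt_7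
    (bb : ∀ (m : ℕ) (V' E' : Type) [Fintype V'] [DecidableEq V'] [Fintype E'],
      ∀ (f₁ f₂ : E' → V') (col' : E' → Fin m) (part' : V' → Bool),
        (∀ e : E', part' (f₁ e) ≠ part' (f₂ e)) →
        (∀ c : Fin m, IsMatchingE f₁ f₂ (colourClass col' c) ∧
          m ≤ (colourClass col' c).card) →
        ∃ M : Finset E', IsMatchingE f₁ f₂ M ∧ IsRainbow col' M ∧
          (m : ℝ) - Real.sqrt m ≤ M.card) :
    ∃ n₀ : ℕ, ∀ n : ℕ, n₀ ≤ n →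
      ∀ (V E : Type) [Fintype V] [DecidableEq V] [Fintype E],
        ∀ (e₁ e₂ : E → V) (col : E → Fin n) (part : V → Bool),
          (∀ e : E, part (e₁ e) ≠ part (e₂ e)) →
          (∀ c : Fin n, IsMatchingE e₁ e₂ (colourClass col c) ∧
            (n : ℝ) + 7 * (n : ℝ) ^ ((3 : ℝ) / 4) ≤ (colourClass col c).card) →
          ∃ M : Finset E, IsMatchingE e₁ e₂ M ∧ IsRainbow col M ∧
            ∀ c : Fin n, ∃ e ∈ M, col e = c := by
  classical
  refine ⟨10^8, ?_⟩
  intro n hn V E _ _ _ e₁ e₂ col part hbip hcl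
  set S : ℕ := ⌈7 * (n:ℝ) ^ ((3:ℝ)/4)⌉₊ with hSdef
  set t : ℕ := ⌈Real.sqrt n⌉₊ with htdef
  set N : ℕ := n + S with hNdef
  set q : ℝ := (9/5) * ((n:ℝ) ^ ((1:ℝ)/4))⁻¹ with hqdef
  obtain ⟨hq0, hq1, hA, hB⟩ := numeric_bounds n S t N q hn hqdef hSdef htdef hNdef
  -- choose trimmed colour classes K c of size exactly N
  have hKex : ∀ c : Fin n, ∃ Kc, Kc ⊆ colourClass col c ∧ Kc.card = N := by
    intro c
    have h1 := (hcl c).2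
    have hn_le : n ≤ (colourClass col c).card := by
      have h2 : (n:ℝ) ≤ ((colourClass col c).card : ℝ) := by
        have h7 : (0:ℝ) ≤ 7*(n:ℝ)^((3:ℝ)/4) := by positivity
        linarith
      exact_mod_cast h2
    have hcard : N ≤ (colourClass col c).card := by
      have hS_le : S ≤ (colourClass col c).card - n := by
        rw [hSdef, Nat.ceil_le, Nat.cast_sub hn_le]
        linarith
      omega
    obtain ⟨Kc, hsub, hcardK⟩ := Finset.exists_subset_card_eq hcard
    exact ⟨Kc, hsub, hcardK⟩
  choose K hKsub hKcard using hKex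
  have hKmatch : ∀ c, IsMatchingE e₁ e₂ (K c) :=
    fun c => isMatchingE_subset (hcl c).1 (hKsub c)
  have hKcol : ∀ c, ∀ e ∈ K c, col e = c := by
    intro c e he
    have := hKsub c he
    simp only [colourClass, Finset.mem_filter] at this
    exact this.2
  -- probabilistic step: get a good vertex bipartition g
  obtain ⟨g, hg⟩ := prob_step n S t N hNdef e₁ e₂ K hKmatch hKcard q hq0 hq1 hA hB
  -- Stage 1: the sub-multigraph on non-reserve edges
  let E' : Type := {e : E // e ∈ K (col e) ∧ g (e₁ e) = false ∧ g (e₂ e) = false}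
  let f₁ : E' → V := fun e => e₁ e.1
  let f₂ : E' → V := fun e => e₂ e.1
  let col' : E' → Fin n := fun e => col e.1
  have hmemK : ∀ (x : E') (c : Fin n), col' x = c → x.1 ∈ K c := by
    intro x c hxc
    have := x.2.1
    rwa [show col x.1 = c from hxc] at this
  have hcls : ∀ c : Fin n, IsMatchingE f₁ f₂ (colourClass col' c) ∧
      n ≤ (colourClass col' c).card := by
    intro c
    constructor
    · constructor
      · intro x hx
        simp only [colourClass, Finset.mem_filter] at hx
        exact (hKmatch c).1 x.1 (hmemK x c hx.2)
      · intro a ha b hb hab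
        simp only [colourClass, Finset.mem_filter] at ha hb
        have hne : a.1 ≠ b.1 := fun h => hab (Subtype.ext h)
        exact (hKmatch c).2 a.1 (hmemK a c ha.2) b.1 (hmemK b c hb.2) hne
    · have hcardeq : ((K c).filter
          (fun e => g (e₁ e) = false ∧ g (e₂ e) = false)).card
          = (colourClass col' c).card := by
        refine Finset.card_bij (fun a ha => ⟨a, ?_, ?_⟩) ?_ ?_ ?_
        · have haK := (Finset.mem_filter.mp ha).1
          rwa [hKcol c a haK]
        · exact (Finset.mem_filter.mp ha).2
        · intro a ha
          simp only [colourClass, Finset.mem_filter, Finset.mem_univ, true_and]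
          exact hKcol c a (Finset.mem_filter.mp ha).1
        · intro a ha b hb hEq
          exact congrArg Subtype.val hEq
        · intro b hb
          simp only [colourClass, Finset.mem_filter, Finset.mem_univ, true_and] at hb
          refine ⟨b.1, ?_, ?_⟩
          · refine Finset.mem_filter.mpr ⟨hmemK b c hb, b.2.2⟩
          · rfl
      rw [← hcardeq]
      exact (hg c).1
  obtain ⟨M', hM'm, hM'r, hM'card⟩ := bb n V E' f₁ f₂ col' part (fun e => hbip e.1) hcls
  -- push M' down to E
  let M₁ : Finset E := M'.image (fun e => e.1)
  have hM₁card : M₁.card = M'.card :=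
    Finset.card_image_of_injective _ Subtype.val_injective
  have hM₁pre : ∀ e ∈ M₁, ∃ x ∈ M', x.1 = e := by
    intro e he
    obtain ⟨x, hx, rfl⟩ := Finset.mem_image.mp he
    exact ⟨x, hx, rfl⟩
  have hM₁m : IsMatchingE e₁ e₂ M₁ := by
    constructor
    · intro e he
      obtain ⟨x, hx, rfl⟩ := hM₁pre e he
      exact hM'm.1 x hx
    · intro a ha b hb hab
      obtain ⟨x, hx, rfl⟩ := hM₁pre a ha
      obtain ⟨y, hy, rfl⟩ := hM₁pre b hb
      have hxy : x ≠ y := fun h => hab (congrArg Subtype.val h)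
      exact hM'm.2 x hx y hy hxy
  have hM₁r : IsRainbow col M₁ := by
    intro a ha b hb hab
    obtain ⟨x, hx, rfl⟩ := hM₁pre a (Finset.mem_coe.mp ha)
    obtain ⟨y, hy, rfl⟩ := hM₁pre b (Finset.mem_coe.mp hb)
    exact congrArg Subtype.val (hM'r (Finset.mem_coe.mpr hx) (Finset.mem_coe.mpr hy) hab)
  have hM₁false : ∀ e ∈ M₁, g (e₁ e) = false ∧ g (e₂ e) = false := by
    intro e he
    obtain ⟨x, hx, rfl⟩ := hM₁pre e he
    exact x.2.2
  -- the missing colours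
  set used : Finset (Fin n) := M₁.image col with husedDef
  set R : Finset (Fin n) := Finset.univ \ used with hRdef
  have husedcard : used.card = M₁.card := Finset.card_image_of_injOn hM₁r
  have hRcard : R.card = n - used.card := by
    rw [hRdef, Finset.card_sdiff_of_subset (Finset.subset_univ _), Finset.card_univ, Fintype.card_fin]
  have hused_le : used.card ≤ n := by
    have := Finset.card_le_card (Finset.subset_univ used)
    rwa [Finset.card_univ, Fintype.card_fin] at this
  have hRt : R.card ≤ t := by
    have hMn : (n:ℝ) - Real.sqrt n ≤ (M'.card : ℝ) := hM'card
    have hR1 : (R.card : ℝ) = (n:ℝ) - (used.card : ℝ) := by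
      rw [hRcard, Nat.cast_sub hused_le]
    have hR2 : (R.card : ℝ) ≤ Real.sqrt n := by
      rw [hR1, husedcard, hM₁card]
      linarith
    have hR3 : (R.card : ℝ) ≤ (t:ℝ) := le_trans hR2 (by rw [htdef]; exact Nat.le_ceil _)
    exact_mod_cast hR3
  -- Stage 2: repair the missing colours using the reserve edges
  set T : Fin n → Finset E := fun c =>
    (K c).filter (fun e => g (e₁ e) = true ∧ g (e₂ e) = true) with hTdef
  obtain ⟨P, hPm, hPr, hPmem, hPcov⟩ := repair e₁ e₂ col R T
    (fun c _ => isMatchingE_subset (hKmatch c) (Finset.filter_subset _ _))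
    (fun c _ e he => hKcol c e (Finset.mem_filter.mp he).1)
    (by
      intro c _
      have h1 := (hg c).2
      have h2 : 2 * t ≤ (T c).card := h1
      omega)
  have hPtrue : ∀ e ∈ P, g (e₁ e) = true ∧ g (e₂ e) = true := by
    intro e he
    have := (hPmem e he).2
    rw [hTdef] at this
    exact (Finset.mem_filter.mp this).2
  have hPR : ∀ e ∈ P, col e ∈ R := fun e he => (hPmem e he).1
  -- cross disjointness
  have hcross : ∀ x ∈ M₁, ∀ y ∈ P, Disjoint (edgeEnds e₁ e₂ x) (edgeEnds e₁ e₂ y) := by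
    intro x hx y hy
    rw [Finset.disjoint_left]
    intro v hv1 hv2
    have hfx : g v = false := by
      simp only [edgeEnds, Finset.mem_insert, Finset.mem_singleton] at hv1
      rcases hv1 with rfl | rfl
      · exact (hM₁false x hx).1
      · exact (hM₁false x hx).2
    have hty : g v = true := by
      simp only [edgeEnds, Finset.mem_insert, Finset.mem_singleton] at hv2
      rcases hv2 with rfl | rfl
      · exact (hPtrue y hy).1
      · exact (hPtrue y hy).2
    rw [hfx] at hty
    exact Bool.false_ne_true hty
  refine ⟨M₁ ∪ P, ⟨?_, ?_⟩, ?_, ?_⟩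
  · intro e he
    rcases Finset.mem_union.mp he with h | h
    · exact hM₁m.1 e h
    · exact hPm.1 e h
  · intro a ha b hb hab
    rcases Finset.mem_union.mp ha with h1 | h1 <;> rcases Finset.mem_union.mp hb with h2 | h2
    · exact hM₁m.2 a h1 b h2 hab
    · exact hcross a h1 b h2
    · exact (hcross b h2 a h1).symm
    · exact hPm.2 a h1 b h2 hab
  · intro a ha b hb hab
    rcases Finset.mem_union.mp (Finset.mem_coe.mp ha) with h1 | h1 <;>
      rcases Finset.mem_union.mp (Finset.mem_coe.mp hb) with h2 | h2
    · exact hM₁r (Finset.mem_coe.mpr h1) (Finset.mem_coe.mpr h2) hab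
    · exfalso
      have hbR : col b ∈ R := hPR b h2
      rw [hRdef, Finset.mem_sdiff] at hbR
      exact hbR.2 (hab ▸ Finset.mem_image_of_mem col h1)
    · exfalso
      have haR : col a ∈ R := hPR a h1
      rw [hRdef, Finset.mem_sdiff] at haR
      exact haR.2 (hab ▸ Finset.mem_image_of_mem col h2)
    · exact hPr (Finset.mem_coe.mpr h1) (Finset.mem_coe.mpr h2) hab
  · intro c
    by_cases hc : c ∈ used
    · obtain ⟨e, he, hce⟩ := Finset.mem_image.mp hc
      exact ⟨e, Finset.mem_union_left _ he, hce⟩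
    · have hcR : c ∈ R := by
        rw [hRdef, Finset.mem_sdiff]
        exact ⟨Finset.mem_univ _, hc⟩
      obtain ⟨e, he, hce⟩ := hPcov c hcR
      exact ⟨e, Finset.mem_union_right _ he, hce⟩
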